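/- arXiv:2010.01896 — 2 statements merged into one kernel-verified Lean document; each statement's English description precedes it below -/
import Mathlib

section
/- For every η ∈ K^* and every finite subset S ⊂ C(k), one has N_{S,gcd}(η, η') ≥ N_S(η) − N̄_S(η) − 3𝔤. -/
open scoped BigOperators Classical

namespace FunctionFieldGCD

variable {K : Type*} [Field K] {Point : Type*}

/-- Truncated order of vanishing `v_𝔭^0(f) = max {0, v_𝔭(f)}`. -/
noncomputable def v0 (v : Point → K → ℤ) (p : Point) (f : K) : ℤ := max 0 (v p f)

/-- The height `h(f) = Σ_𝔭 −min{0, v_𝔭(f)}` of `f`, counting poles with multiplicity. -/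
noncomputable def height (v : Point → K → ℤ) (f : K) : ℤ := ∑ᶠ p : Point, max 0 (-(v p f))

/-- `min {v_𝔭^0(f), v_𝔭^0(g)}` with the convention `v_𝔭^0(0) = +∞`. -/
noncomputable def minv0 (v : Point → K → ℤ) (p : Point) (f g : K) : ℤ :=
  if f = 0 then v0 v p g else if g = 0 then v0 v p f else min (v0 v p f) (v0 v p g)

/-- `N_{S,gcd}(f,g) = Σ_{𝔭∉S} min{v_𝔭^0(f), v_𝔭^0(g)}`. -/
noncomputable def NSgcd (v : Point → K → ℤ) (S : Set Point) (f g : K) : ℤ :=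
  ∑ᶠ p ∈ Sᶜ, minv0 v p f g

/-- `h_gcd(f,g) = Σ_{𝔭} min{v_𝔭^0(f), v_𝔭^0(g)}`. -/
noncomputable def hgcd (v : Point → K → ℤ) (f g : K) : ℤ :=
  ∑ᶠ p : Point, minv0 v p f g

/-- `N_S(f)`: number of zeros of `f` outside `S`, with multiplicity. -/
noncomputable def NS (v : Point → K → ℤ) (S : Set Point) (f : K) : ℤ :=
  ∑ᶠ p ∈ Sᶜ, v0 v p f

/-- `N̄_S(f)`: number of zeros of `f` outside `S`, without multiplicity. -/
noncomputable def NSbar (v : Point → K → ℤ) (S : Set Point) (f : K) : ℤ :=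
  ∑ᶠ p ∈ Sᶜ, min 1 (v0 v p f)

/-- membership in the group `O_S^*` of `S`-units. -/
def IsSUnit (v : Point → K → ℤ) (S : Set Point) (f : K) : Prop :=
  f ≠ 0 ∧ ∀ p ∉ S, v p f = 0

/-- `f` is a constant, i.e. belongs to (the image of) `k`. -/
def IsConst (k : Type*) [Field k] [Algebra k K] (f : K) : Prop :=
  ∃ c : k, algebraMap k K c = f

/-- Projective height of a finite tuple: `h(f_0,…,f_m) = Σ_𝔭 −min_j v_𝔭(f_j)`. -/
noncomputable def heightProj {ι : Type*} [Fintype ι] (v : Point → K → ℤ) (f : ι → K) : ℤ :=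
  ∑ᶠ p : Point,
    -(if h : (Finset.univ : Finset ι).Nonempty then Finset.univ.inf' h fun j => v p (f j) else 0)

/-- `v_𝔭(F) = min_{i ∈ I_F} v_𝔭(a_i)` for a multivariable polynomial `F = Σ a_i x^i`. -/
noncomputable def vPoly {n : ℕ} (v : Point → K → ℤ) (p : Point) (F : MvPolynomial (Fin n) K) :
    ℤ :=
  if h : F.support.Nonempty then F.support.inf' h fun mm => v p (MvPolynomial.coeff mm F) else 0

/-- The height `h(F) = Σ_𝔭 −v_𝔭(F)` of a multivariable polynomial. -/
noncomputable def hPoly {n : ℕ} (v : Point → K → ℤ) (F : MvPolynomial (Fin n) K) : ℤ :=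
  ∑ᶠ p : Point, -(vPoly v p F)

/-- The relevant height `h̃(F) = Σ_𝔭 −min{0, v_𝔭(F)}` of a multivariable polynomial. -/
noncomputable def htilde {n : ℕ} (v : Point → K → ℤ) (F : MvPolynomial (Fin n) K) : ℤ :=
  ∑ᶠ p : Point, max 0 (-(vPoly v p F))

/-- `max_{1≤i≤n} h(g_i)` (heights are nonnegative, so the `toNat` is harmless). -/
noncomputable def maxHeight {n : ℕ} (v : Point → K → ℤ) (g : Fin n → K) : ℤ :=
  ((Finset.univ.sup fun i => (height v (g i)).toNat : ℕ) : ℤ)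

/-- `u^m = u_1^{m_1} ⋯ u_n^{m_n}` for an integer exponent vector `m`. -/
noncomputable def prodZPow {n : ℕ} (u : Fin n → K) (mm : Fin n → ℤ) : K :=
  ∏ j, u j ^ mm j

/-- Coprimality of multivariable polynomials: no common non-unit factor. -/
def CoprimePoly {n : ℕ} (F G : MvPolynomial (Fin n) K) : Prop :=
  ∀ P : MvPolynomial (Fin n) K, P ∣ F → P ∣ G → IsUnit P

/-- `P` is a monomial `a·x^i`. -/
def IsMonomialPoly {n : ℕ} (P : MvPolynomial (Fin n) K) : Prop :=
  ∃ (mm : Fin n →₀ ℕ) (a : K), P = MvPolynomial.monomial mm a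

/-- Axioms expressing that `K`, equipped with the family of normalized order functions
`v_𝔭` indexed by the points `𝔭 ∈ C(k)` of a smooth projective curve `C` of genus `genus`
over the algebraically closed field `k`, is the function field `k(C)`. -/
structure IsFunctionField (k : Type*) [Field k] [Algebra k K]
    (v : Point → K → ℤ) (genus : ℕ) : Prop where
  v_mul : ∀ (p : Point) (f g : K), f ≠ 0 → g ≠ 0 → v p (f * g) = v p f + v p g
  v_add : ∀ (p : Point) (f g : K), f ≠ 0 → g ≠ 0 → f + g ≠ 0 → min (v p f) (v p g) ≤ v p (f + g)
  v_one : ∀ p : Point, v p (1 : K) = 0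
  v_algebraMap : ∀ (p : Point) (c : k), c ≠ 0 → v p (algebraMap k K c) = 0
  exists_uniformizer : ∀ p : Point, ∃ f : K, f ≠ 0 ∧ v p f = 1
  finite_support : ∀ f : K, f ≠ 0 → {p : Point | v p f ≠ 0}.Finite
  sum_v : ∀ f : K, f ≠ 0 → ∑ᶠ p : Point, v p f = 0
  const_of_nonneg : ∀ f : K, f ≠ 0 → (∀ p : Point, 0 ≤ v p f) → ∃ c : k, algebraMap k K c = f
  riemann_roch : ∀ D : Point →₀ ℤ, 2 * (genus : ℤ) - 2 < D.sum (fun _ d => d) →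
    (Module.finrank k
        (Submodule.span k {f : K | f = 0 ∨ ∀ p : Point, -(D p) ≤ v p f}) : ℤ)
      = D.sum (fun _ d => d) + 1 - genus

/-- Axioms for the global derivation `η ↦ η' = dη/dt` on `K` determined by an element
`t` as in Proposition 12 (`dt p` plays the role of `v_𝔭(d_𝔭 t)`). -/
structure IsGoodDerivation (k : Type*) [Field k] [Algebra k K]
    (v : Point → K → ℤ) (genus : ℕ) (D : K → K) (dt : Point → ℤ) : Prop where
  map_add : ∀ f g : K, D (f + g) = D f + D g
  leibniz : ∀ f g : K, D (f * g) = f * D g + g * D f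
  map_const : ∀ c : k, D (algebraMap k K c) = 0
  ker_const : ∀ f : K, D f = 0 → ∃ c : k, algebraMap k K c = f
  v_D_of_vne : ∀ f : K, f ≠ 0 → ∀ p : Point, v p f ≠ 0 →
    D f ≠ 0 ∧ v p (D f) = v p f - 1 - dt p
  v_D_of_veq : ∀ f : K, f ≠ 0 → ∀ p : Point, v p f = 0 → D f ≠ 0 → -(dt p) ≤ v p (D f)
  sum_dt : ∑ᶠ p : Point, max 0 (dt p) ≤ 3 * (genus : ℤ)

/-- `D_u(F) = Σ_{i∈I_F} ((a_i u^i)' / u^i)·x^i`. -/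
noncomputable def Du {n : ℕ} (D : K → K) (u : Fin n → K) (F : MvPolynomial (Fin n) K) :
    MvPolynomial (Fin n) K :=
  ∑ mm ∈ F.support,
    MvPolynomial.monomial mm
      ((D (MvPolynomial.coeff mm F * ∏ j, u j ^ mm j)) / ∏ j, u j ^ mm j)


/-- The Riemann-Roch space `L(D)` as a submodule. -/
private def Lmod (k : Type*) [Field k] [Algebra k K]
    (v : Point → K → ℤ) (genus : ℕ) (hK : IsFunctionField k v genus) (Dv : Point →₀ ℤ) :
    Submodule k K where
  carrier := {f : K | f = 0 ∨ ∀ p : Point, -(Dv p) ≤ v p f}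
  zero_mem' := Or.inl rfl
  add_mem' := by
    intro a b ha hb
    simp only [Set.mem_setOf_eq] at ha hb ⊢
    by_cases ha0 : a = 0
    · subst ha0; simpa using hb
    by_cases hb0 : b = 0
    · subst hb0; simpa using ha
    by_cases hab : a + b = 0
    · exact Or.inl hab
    · right
      intro p
      have h1 := ha.resolve_left ha0 p
      have h2 := hb.resolve_left hb0 p
      exact le_trans (le_min h1 h2) (hK.v_add p a b ha0 hb0 hab)
  smul_mem' := by
    intro c a ha
    simp only [Set.mem_setOf_eq] at ha ⊢
    by_cases hc : c = 0
    · subst hc; rw [zero_smul]; exact Or.inl rfl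
    by_cases ha0 : a = 0
    · subst ha0; rw [smul_zero]; exact Or.inl rfl
    have hmap : algebraMap k K c ≠ 0 := fun h =>
      hc ((algebraMap k K).injective (by rw [h, map_zero]))
    right
    intro p
    rw [Algebra.smul_def, hK.v_mul p _ a hmap ha0, hK.v_algebraMap p c hc, zero_add]
    exact ha.resolve_left ha0 p

private lemma mem_span_L_iff {k : Type*} [Field k] [Algebra k K]
    {v : Point → K → ℤ} {genus : ℕ} (hK : IsFunctionField k v genus) (Dv : Point →₀ ℤ)
    (f : K) :
    f ∈ Submodule.span k {f : K | f = 0 ∨ ∀ p : Point, -(Dv p) ≤ v p f} ↔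
      (f = 0 ∨ ∀ p : Point, -(Dv p) ≤ v p f) := by
  have h : {f : K | f = 0 ∨ ∀ p : Point, -(Dv p) ≤ v p f}
      = ((Lmod k v genus hK Dv : Submodule k K) : Set K) := rfl
  rw [h, Submodule.span_eq]
  exact Iff.rfl

private lemma sum_v_nonneg {k : Type*} [Field k] [Algebra k K]
    {v : Point → K → ℤ} {genus : ℕ} (hK : IsFunctionField k v genus) (q : Point)
    {ι : Type*} (S : Finset ι) (t : ι → K) (h : ∀ s ∈ S, t s = 0 ∨ 0 ≤ v q (t s)) :
    (∑ s ∈ S, t s) = 0 ∨ 0 ≤ v q (∑ s ∈ S, t s) := by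
  classical
  induction S using Finset.induction with
  | empty => left; simp
  | @insert a s hns ih =>
    rw [Finset.sum_insert hns]
    have ha := h a (Finset.mem_insert_self a s)
    have hs := ih fun x hx => h x (Finset.mem_insert_of_mem hx)
    by_cases ha0 : t a = 0
    · rw [ha0, zero_add]; exact hs
    by_cases hs0 : (∑ x ∈ s, t x) = 0
    · rw [hs0, add_zero]; exact ha
    by_cases hadd : t a + ∑ x ∈ s, t x = 0
    · exact Or.inl hadd
    · right
      have h1 := ha.resolve_left ha0
      have h2 := hs.resolve_left hs0
      have := hK.v_add q _ _ ha0 hs0 hadd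
      omega


private lemma dtpos_support_finite {k : Type*} [Field k] [Algebra k K]
    {v : Point → K → ℤ} {genus : ℕ} (hK : IsFunctionField k v genus)
    {D : K → K} {dt : Point → ℤ} (hD : IsGoodDerivation k v genus D dt) :
    (Function.support fun p : Point => max 0 (dt p)).Finite := by
  classical
  by_contra hinf
  have hA : (Function.support fun p : Point => max 0 (dt p)).Infinite := hinf
  obtain ⟨p₀, -⟩ := hA.nonempty
  set N : ℤ := 2 * (genus : ℤ) + 2 with hN
  set D₀ : Point →₀ ℤ := Finsupp.single p₀ N with hD₀
  have hdeg₀ : D₀.sum (fun _ d => d) = N := Finsupp.sum_single_index rfl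
  have hRR₀ := hK.riemann_roch D₀ (by rw [hdeg₀]; omega)
  rw [hdeg₀] at hRR₀
  -- the container space V₀ = L(N p₀) is finite dimensional
  set V₀ := Submodule.span k {f : K | f = 0 ∨ ∀ p : Point, -(D₀ p) ≤ v p f} with hV₀
  have hpos : 0 < Module.finrank k V₀ := by omega
  haveI : Module.Finite k V₀ := Module.finite_of_finrank_pos hpos
  obtain ⟨S, hSspan⟩ : ∃ S : Finset K, Submodule.span k (↑S : Set K) = V₀ :=
    Module.Finite.iff_fg.mp ‹Module.Finite k V₀›
  -- the finite set of bad points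
  set badset : Set Point :=
    {p₀} ∪ ⋃ s ∈ (S : Set K), {p : Point | D s ≠ 0 ∧ v p (D s) ≠ 0} with hbadset
  have hbadfin : badset.Finite := by
    apply Set.Finite.union (Set.finite_singleton p₀)
    apply Set.Finite.biUnion S.finite_toSet
    intro s _
    rcases eq_or_ne (D s) 0 with h | h
    · exact Set.Finite.subset (Set.finite_empty) (by intro p hp; exact (hp.1 h).elim)
    · exact (hK.finite_support (D s) h).subset (by intro p hp; exact hp.2)
  -- pick a good point q with dt q > 0 outside the bad set
  obtain ⟨q, hq⟩ := (hA.diff hbadfin).nonempty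
  obtain ⟨hqA, hqbad⟩ := hq
  have hdtq : 0 < dt q := by
    have := hqA
    simp only [Function.mem_support] at this
    omega
  have hqp₀ : p₀ ≠ q := by
    intro h
    exact hqbad (Or.inl (by rw [h]; rfl))
  have hqS : ∀ s ∈ S, D s = 0 ∨ v q (D s) = 0 := by
    intro s hs
    by_contra hcon
    push_neg at hcon
    exact hqbad (Or.inr (Set.mem_biUnion hs ⟨hcon.1, hcon.2⟩))
  -- the two auxiliary divisors
  set D₁ : Point →₀ ℤ := D₀ + Finsupp.single q (-1) with hD₁
  set D₂ : Point →₀ ℤ := D₀ + Finsupp.single q (-2) with hD₂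
  have hdeg₁ : D₁.sum (fun _ d => d) = N - 1 := by
    rw [hD₁, Finsupp.sum_add_index' (fun _ => rfl) (fun _ _ _ => rfl), hdeg₀,
      Finsupp.sum_single_index rfl]
    ring
  have hdeg₂ : D₂.sum (fun _ d => d) = N - 2 := by
    rw [hD₂, Finsupp.sum_add_index' (fun _ => rfl) (fun _ _ _ => rfl), hdeg₀,
      Finsupp.sum_single_index rfl]
    ring
  have hRR₁ := hK.riemann_roch D₁ (by rw [hdeg₁]; omega)
  have hRR₂ := hK.riemann_roch D₂ (by rw [hdeg₂]; omega)
  rw [hdeg₁] at hRR₁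
  rw [hdeg₂] at hRR₂
  -- pointwise values of the divisors
  have hD₀q : D₀ q = 0 := by
    rw [hD₀, Finsupp.single_apply, if_neg hqp₀]
  have hD₁val : ∀ p : Point, D₁ p = D₀ p + (if q = p then -1 else 0) := by
    intro p; rw [hD₁, Finsupp.add_apply]; simp only [Finsupp.single_apply]
  have hD₂val : ∀ p : Point, D₂ p = D₀ p + (if q = p then -2 else 0) := by
    intro p; rw [hD₂, Finsupp.add_apply]; simp only [Finsupp.single_apply]
  set V₁ := Submodule.span k {f : K | f = 0 ∨ ∀ p : Point, -(D₁ p) ≤ v p f} with hV₁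
  set V₂ := Submodule.span k {f : K | f = 0 ∨ ∀ p : Point, -(D₂ p) ≤ v p f} with hV₂
  have hle : V₂ ≤ V₁ := by
    apply Submodule.span_mono
    intro f hf
    simp only [Set.mem_setOf_eq] at hf ⊢
    rcases hf with rfl | hf
    · exact Or.inl rfl
    · right
      intro p
      have h1 := hf p
      have h2 := hD₁val p
      have h3 := hD₂val p
      by_cases hqp : q = p <;> simp [hqp] at h2 h3 <;> omega
  have hne : V₂ ≠ V₁ := by
    intro h
    rw [h] at hRR₂
    omega
  obtain ⟨f, hfV₁, hfnV₂⟩ := SetLike.exists_of_lt (lt_of_le_of_ne hle hne)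
  have hf₁ := (mem_span_L_iff hK D₁ f).mp hfV₁
  have hf0 : f ≠ 0 := by
    rintro rfl
    exact hfnV₂ (zero_mem _)
  have hf₁' := hf₁.resolve_left hf0
  have hnot : ¬ ∀ p : Point, -(D₂ p) ≤ v p f := by
    intro h
    exact hfnV₂ ((mem_span_L_iff hK D₂ f).mpr (Or.inr h))
  push_neg at hnot
  obtain ⟨p', hp'⟩ := hnot
  -- the failing point must be q, and v q f = 1
  have hvqf : v q f = 1 := by
    have h1 := hf₁' p'
    have h2 := hD₁val p'
    have h3 := hD₂val p'
    by_cases hqp : q = p'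
    · subst hqp
      have h4 := hf₁' q
      rw [hD₁val q, if_pos rfl, hD₀q] at h4
      rw [hD₂val q, if_pos rfl, hD₀q] at hp'
      omega
    · rw [if_neg hqp] at h2 h3
      omega
  -- f belongs to the container space V₀, hence to the span of S
  have hfV₀ : f ∈ V₀ := by
    rw [hV₀]
    apply (mem_span_L_iff hK D₀ f).mpr
    right
    intro p
    have h1 := hf₁' p
    have h2 := hD₁val p
    by_cases hqp : q = p <;> simp [hqp] at h2 <;> omega
  rw [← hSspan] at hfV₀
  obtain ⟨coef, -, hsum⟩ := Submodule.mem_span_finset.mp hfV₀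
  -- D is k-linear
  set Dlin : K →ₗ[k] K :=
    { toFun := D
      map_add' := hD.map_add
      map_smul' := by
        intro c x
        simp only [RingHom.id_apply]
        rw [Algebra.smul_def, hD.leibniz, hD.map_const c, mul_zero, add_zero,
          ← Algebra.smul_def] } with hDlin
  have hDf : D f = ∑ s ∈ S, coef s • D s := by
    have : D f = Dlin f := rfl
    rw [this, ← hsum, map_sum]
    apply Finset.sum_congr rfl
    intro s _
    rw [LinearMap.map_smul]
    rfl
  -- each summand is zero or has nonnegative valuation at q
  have hterm : ∀ s ∈ S, coef s • D s = 0 ∨ 0 ≤ v q (coef s • D s) := by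
    intro s hs
    by_cases hc : coef s = 0
    · left; rw [hc, zero_smul]
    by_cases hDs : D s = 0
    · left; rw [hDs, smul_zero]
    have hv0 := (hqS s hs).resolve_left hDs
    right
    have hmap : algebraMap k K (coef s) ≠ 0 := fun h =>
      hc ((algebraMap k K).injective (by rw [h, map_zero]))
    rw [Algebra.smul_def, hK.v_mul q _ _ hmap hDs, hK.v_algebraMap q _ hc, hv0]
    norm_num
  have hDfv := sum_v_nonneg hK q S (fun s => coef s • D s) hterm
  rw [← hDf] at hDfv
  -- contradiction with v_D_of_vne at q
  obtain ⟨hDf0, hveq⟩ := hD.v_D_of_vne f hf0 q (by rw [hvqf]; exact one_ne_zero)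
  rcases hDfv with h | h
  · exact hDf0 h
  · rw [hveq, hvqf] at h
    omega

private lemma finsum_mem_compl_eq_sum_aux {Point : Type*} (S : Set Point) (f : Point → ℤ)
    (T : Finset Point) (hsupp : Function.support f ⊆ ↑T) :
    ∑ᶠ p ∈ Sᶜ, f p = ∑ p ∈ T.filter (fun p => p ∉ S), f p := by
  apply finsum_mem_eq_sum_of_inter_support_eq
  ext p
  simp only [Set.mem_inter_iff, Set.mem_compl_iff, Function.mem_support, Finset.coe_filter,
    Set.mem_setOf_eq]
  constructor
  · rintro ⟨h1, h2⟩; exact ⟨⟨hsupp h2, h1⟩, h2⟩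
  · rintro ⟨⟨_, h1⟩, h2⟩; exact ⟨h1, h2⟩

/-- **Lemma 3.1(a).** `N_{S,gcd}(η, η') ≥ N_S(η) − N̄_S(η) − 3𝔤` for every nonzero `η ∈ K`. -/
theorem NSgcd_deriv_lower_bound
    (k K Point : Type*) [Field k] [Field K] [Algebra k K] [IsAlgClosed k] [CharZero k]
    (v : Point → K → ℤ) (genus : ℕ) (hK : IsFunctionField k v genus)
    (D : K → K) (dt : Point → ℤ) (hD : IsGoodDerivation k v genus D dt)
    (S : Set Point) (hS : S.Finite) (η : K) (hη : η ≠ 0) :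
    NS v S η - NSbar v S η - 3 * (genus : ℤ) ≤ NSgcd v S η (D η) := by
  by_cases hpos : ∃ p : Point, 0 < v p η
  · -- main case: η has a zero, hence D η ≠ 0
    obtain ⟨p₀, hp₀⟩ := hpos
    have hDη : D η ≠ 0 := (hD.v_D_of_vne η hη p₀ (by omega)).1
    have hfin : (Function.support fun p : Point => max 0 (dt p)).Finite :=
      dtpos_support_finite hK hD
    -- the finite set containing all relevant supports
    set T : Finset Point :=
      (((hK.finite_support η hη).union (hK.finite_support (D η) hDη)).union hfin).toFinset
      with hT
    have hmemT : ∀ p : Point,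
        (v p η ≠ 0 ∨ v p (D η) ≠ 0 ∨ max 0 (dt p) ≠ 0) → p ∈ T := by
      intro p hp
      simp only [hT, Set.Finite.mem_toFinset, Set.mem_union, Set.mem_setOf_eq,
        Function.mem_support]
      tauto
    -- support facts
    have hsuppA : Function.support (fun p => v0 v p η) ⊆ ↑T := by
      intro p hp
      simp only [Function.mem_support, v0] at hp
      exact hmemT p (Or.inl (by omega))
    have hsuppB : Function.support (fun p => min 1 (v0 v p η)) ⊆ ↑T := by
      intro p hp
      simp only [Function.mem_support, v0] at hp
      exact hmemT p (Or.inl (by omega))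
    have hminv0 : ∀ p : Point, minv0 v p η (D η) = min (v0 v p η) (v0 v p (D η)) := by
      intro p
      simp only [minv0, if_neg hη, if_neg hDη]
    have hsuppC : Function.support (fun p => minv0 v p η (D η)) ⊆ ↑T := by
      intro p hp
      simp only [Function.mem_support, hminv0, v0] at hp
      exact hmemT p (Or.inl (by omega))
    have hsuppD : Function.support (fun p => max 0 (dt p)) ⊆ ↑T := by
      intro p hp
      simp only [Function.mem_support] at hp
      exact hmemT p (Or.inr (Or.inr hp))
    set T' : Finset Point := T.filter (fun p => p ∉ S) with hT'
    -- rewrite the three finsums as finite sums over T'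
    have hNS : NS v S η = ∑ p ∈ T', v0 v p η :=
      finsum_mem_compl_eq_sum_aux S _ T hsuppA
    have hNSbar : NSbar v S η = ∑ p ∈ T', min 1 (v0 v p η) :=
      finsum_mem_compl_eq_sum_aux S _ T hsuppB
    have hNSgcd : NSgcd v S η (D η) = ∑ p ∈ T', minv0 v p η (D η) :=
      finsum_mem_compl_eq_sum_aux S _ T hsuppC
    -- bound on the sum of max 0 (dt p) over T'
    have hdtT : ∑ᶠ p : Point, max 0 (dt p) = ∑ p ∈ T, max 0 (dt p) :=
      finsum_eq_sum_of_support_subset _ hsuppD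
    have hdt' : ∑ p ∈ T', max 0 (dt p) ≤ 3 * (genus : ℤ) := by
      calc ∑ p ∈ T', max 0 (dt p) ≤ ∑ p ∈ T, max 0 (dt p) := by
            apply Finset.sum_le_sum_of_subset_of_nonneg (Finset.filter_subset _ _)
            intro i _ _; exact le_max_left _ _
        _ ≤ 3 * (genus : ℤ) := by rw [← hdtT]; exact hD.sum_dt
    -- pointwise inequality
    have hpt : ∀ p ∈ T', v0 v p η - min 1 (v0 v p η) - max 0 (dt p)
        ≤ minv0 v p η (D η) := by
      intro p _
      rw [hminv0]
      by_cases hpe : 0 < v p η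
      · have := (hD.v_D_of_vne η hη p (by omega)).2
        simp only [v0]
        omega
      · simp only [v0]; omega
    rw [hNS, hNSbar, hNSgcd]
    have := Finset.sum_le_sum hpt
    rw [Finset.sum_sub_distrib, Finset.sum_sub_distrib] at this
    omega
  · -- degenerate case: v p η ≤ 0 everywhere, so all three quantities vanish
    push_neg at hpos
    have hA : ∀ p ∈ Sᶜ, v0 v p η = (0 : ℤ) := by
      intro p _; simp only [v0]; have := hpos p; omega
    have hB : ∀ p ∈ Sᶜ, min 1 (v0 v p η) = (0 : ℤ) := by
      intro p hp; rw [hA p hp]; simp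
    have hC : ∀ p ∈ Sᶜ, minv0 v p η (D η) = (0 : ℤ) := by
      intro p hp
      simp only [minv0, if_neg hη]
      by_cases hde : D η = 0
      · rw [if_pos hde]; exact hA p hp
      · rw [if_neg hde, hA p hp]
        have : (0 : ℤ) ≤ v0 v p (D η) := le_max_left _ _
        omega
    have eNS : NS v S η = 0 := by
      rw [NS, finsum_mem_congr rfl hA]; simp
    have eNSbar : NSbar v S η = 0 := by
      rw [NSbar, finsum_mem_congr rfl hB]; simp
    have eNSgcd : NSgcd v S η (D η) = 0 := by
      rw [NSgcd, finsum_mem_congr rfl hC]; simp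
    rw [eNS, eNSbar, eNSgcd]
    omega

end FunctionFieldGCD
end

section
/- Let F be a nonconstant polynomial in K[x_1,…,x_n] and u = (u_1,…,u_n) ∈ (O_S^*)^n. Then h̃(D_u(F)) ≤ (2|I_F| + 1)·h̃(F) + |S| + 3𝔤; in particular, since |I_F| ≤ binom(n + deg F, n) and |S| + 3𝔤 ≤ 3·max{1, 2𝔤−2+|S|}, there exist constants c_1, c_2 depending only on n and deg F (one may take c_1 = 2·binom(n+deg F, n) + 1 and c_2 = 3) such that h̃(D_u(F)) ≤ c_1·h̃(F) + c_2·max{1, 2𝔤−2+|S|}. -/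
open scoped BigOperators Classical

namespace FunctionFieldGCD

variable {K : Type*} [Field K] {Point : Type*}

section AuxLemmas

variable {k : Type*} [Field k] [Algebra k K] {v : Point → K → ℤ} {genus : ℕ}

theorem IsFunctionField.v_div (hK : IsFunctionField k v genus) (p : Point) {x y : K}
    (hx : x ≠ 0) (hy : y ≠ 0) : v p (x / y) = v p x - v p y := by
  have h : x / y ≠ 0 := div_ne_zero hx hy
  have := hK.v_mul p (x / y) y h hy
  rw [div_mul_cancel₀ _ hy] at this
  omega

theorem IsFunctionField.v_pow_zero (hK : IsFunctionField k v genus) (p : Point) {x : K}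
    (hx : x ≠ 0) (h : v p x = 0) (m : ℕ) : v p (x ^ m) = 0 := by
  induction m with
  | zero => simpa using hK.v_one p
  | succ m ih =>
      rw [pow_succ, hK.v_mul p _ _ (pow_ne_zero _ hx) hx, ih, h]
      simp

theorem IsFunctionField.v_prodpow_zero (hK : IsFunctionField k v genus) (p : Point) {n : ℕ}
    {u : Fin n → K} (hu : ∀ j, u j ≠ 0) (mm : Fin n →₀ ℕ) (h0 : ∀ j, v p (u j) = 0) :
    v p (∏ j, u j ^ mm j) = 0 := by
  classical
  have : ∀ s : Finset (Fin n), v p (∏ j ∈ s, u j ^ mm j) = 0 := by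
    intro s
    induction s using Finset.induction with
    | empty => simpa using hK.v_one p
    | @insert a s' hj ih =>
        rw [Finset.prod_insert hj,
          hK.v_mul p _ _ (pow_ne_zero _ (hu a))
            (Finset.prod_ne_zero_iff.2 fun j _ => pow_ne_zero _ (hu j)),
          ih, hK.v_pow_zero p (hu a) (h0 a)]
        simp
  exact this Finset.univ

theorem vPoly_le {n : ℕ} (p : Point) {P : MvPolynomial (Fin n) K} {mm : Fin n →₀ ℕ}
    (h : mm ∈ P.support) : vPoly v p P ≤ v p (P.coeff mm) := by
  have hne : P.support.Nonempty := ⟨mm, h⟩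
  rw [vPoly, dif_pos hne]
  exact Finset.inf'_le _ h

theorem vPoly_exists {n : ℕ} (p : Point) {P : MvPolynomial (Fin n) K}
    (h : P.support.Nonempty) : ∃ mm ∈ P.support, vPoly v p P = v p (P.coeff mm) := by
  rw [vPoly, dif_pos h]
  exact Finset.exists_mem_eq_inf' h _

theorem vPoly_eq_zero {n : ℕ} (p : Point) {P : MvPolynomial (Fin n) K}
    (h : ∀ mm ∈ P.support, v p (P.coeff mm) = 0) : vPoly v p P = 0 := by
  rw [vPoly]
  split_ifs with hs
  · apply le_antisymm
    · obtain ⟨mm, hmm, he⟩ := Finset.exists_mem_eq_inf' hs fun mm => v p (P.coeff mm)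
      rw [he, h mm hmm]
    · exact Finset.le_inf' hs _ fun mm hmm => (h mm hmm).ge
  · rfl

theorem vPoly_support_finite (hK : IsFunctionField k v genus) {n : ℕ}
    (P : MvPolynomial (Fin n) K) : {p : Point | vPoly v p P ≠ 0}.Finite := by
  classical
  apply Set.Finite.subset
    (Set.Finite.biUnion (P.support.finite_toSet)
      (fun mm (hmm : mm ∈ (P.support : Set (Fin n →₀ ℕ))) =>
        hK.finite_support (P.coeff mm) (MvPolynomial.mem_support_iff.mp hmm)))
  intro p hp
  rw [Set.mem_setOf_eq] at hp
  by_contra hnot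
  apply hp
  apply vPoly_eq_zero p
  intro mm hmm
  by_contra h
  apply hnot
  exact Set.mem_biUnion hmm (by exact h)

theorem coeff_Du {n : ℕ} (D : K → K) (u : Fin n → K) (F : MvPolynomial (Fin n) K)
    (mm : Fin n →₀ ℕ) :
    (Du D u F).coeff mm =
      if mm ∈ F.support then (D (F.coeff mm * ∏ j, u j ^ mm j)) / ∏ j, u j ^ mm j else 0 := by
  classical
  rw [Du, MvPolynomial.coeff_sum]
  rw [Finset.sum_congr rfl (fun m _ => MvPolynomial.coeff_monomial mm m _)]
  exact Finset.sum_ite_eq' F.support mm _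

theorem support_Du_subset {n : ℕ} (D : K → K) (u : Fin n → K) (F : MvPolynomial (Fin n) K) :
    (Du D u F).support ⊆ F.support := by
  intro mm h
  rw [MvPolynomial.mem_support_iff, coeff_Du] at h
  by_contra hc
  rw [if_neg hc] at h
  exact h rfl

theorem zsum_le {f g : Point → ℤ} (hf : (Function.support f).Finite)
    (hg : (Function.support g).Finite) (h : ∀ p, f p ≤ g p) : ∑ᶠ p, f p ≤ ∑ᶠ p, g p := by
  classical
  have hT : (Function.support f ∪ Function.support g).Finite := hf.union hg
  rw [finsum_eq_sum_of_support_subset f (s := hT.toFinset) (by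
        rw [Set.Finite.coe_toFinset]; exact Set.subset_union_left),
      finsum_eq_sum_of_support_subset g (s := hT.toFinset) (by
        rw [Set.Finite.coe_toFinset]; exact Set.subset_union_right)]
  exact Finset.sum_le_sum fun i _ => h i

theorem zsum_finset_le {f : Point → ℤ} (hf : (Function.support f).Finite)
    (h0 : ∀ p, 0 ≤ f p) (T : Finset Point) : ∑ p ∈ T, f p ≤ ∑ᶠ p, f p := by
  classical
  rw [finsum_eq_sum_of_support_subset f (s := T ∪ hf.toFinset) (by
    intro p hp
    simp only [Finset.coe_union, Set.mem_union, Set.Finite.coe_toFinset]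
    exact Or.inr hp)]
  exact Finset.sum_le_sum_of_subset_of_nonneg Finset.subset_union_left
    (fun i _ _ => h0 i)

theorem sum_v0_eq (hK : IsFunctionField k v genus) {f : K} (hf : f ≠ 0) :
    ∑ᶠ p : Point, max 0 (v p f) = ∑ᶠ p : Point, max 0 (-(v p f)) := by
  classical
  set T := (hK.finite_support f hf).toFinset with hT
  have hsub1 : (Function.support fun p => max 0 (v p f)) ⊆ ↑T := by
    intro p hp
    simp only [hT, Set.Finite.coe_toFinset, Set.mem_setOf_eq]
    intro h
    apply hp
    simp [Function.mem_support, h]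
  have hsub2 : (Function.support fun p => max 0 (-(v p f))) ⊆ ↑T := by
    intro p hp
    simp only [hT, Set.Finite.coe_toFinset, Set.mem_setOf_eq]
    intro h
    apply hp
    simp [Function.mem_support, h]
  have hsub3 : (Function.support fun p => v p f) ⊆ ↑T := by
    intro p hp
    simp only [hT, Set.Finite.coe_toFinset, Set.mem_setOf_eq]
    exact hp
  have h0 : ∑ p ∈ T, v p f = 0 := by
    rw [← finsum_eq_sum_of_support_subset _ hsub3]
    exact hK.sum_v f hf
  rw [finsum_eq_sum_of_support_subset _ hsub1, finsum_eq_sum_of_support_subset _ hsub2]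
  have : ∑ p ∈ T, max 0 (v p f) - ∑ p ∈ T, max 0 (-(v p f)) = ∑ p ∈ T, v p f := by
    rw [← Finset.sum_sub_distrib]
    exact Finset.sum_congr rfl fun p _ => by omega
  omega


theorem card_le_choose_of_deg_le {n d : ℕ} (s : Finset (Fin n →₀ ℕ))
    (hdeg : ∀ mm ∈ s, (mm.sum fun _ e => e) ≤ d) : s.card ≤ (n + d).choose n := by
  classical
  set φ : (Fin n →₀ ℕ) → Multiset (Fin (n + 1)) := fun mm =>
    (mm.toMultiset.map Fin.castSucc) + Multiset.replicate (d - Multiset.card mm.toMultiset) (Fin.last n) with hφ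
  have hcount : ∀ (mm : Fin n →₀ ℕ) (i : Fin n), (φ mm).count i.castSucc = mm i := by
    intro mm i
    rw [hφ]
    simp only [Multiset.count_add]
    rw [Multiset.count_map_eq_count' _ _ (Fin.castSucc_injective n),
      Finsupp.count_toMultiset, Multiset.count_replicate,
      if_neg (by exact fun h => (Fin.castSucc_lt_last i).ne (h.symm))]
    omega
  have hinj : Set.InjOn φ ↑s := by
    intro mm _ mm' _ h
    ext i
    rw [← hcount mm i, ← hcount mm' i, h]
  have hcard : ∀ mm ∈ s, Multiset.card (φ mm) = d := by
    intro mm hmm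
    have hle : Multiset.card mm.toMultiset ≤ d := by
      rw [Finsupp.card_toMultiset]
      exact hdeg mm hmm
    rw [hφ]
    simp only [Multiset.card_add, Multiset.card_map, Multiset.card_replicate]
    omega
  have hmain : s.card ≤ Fintype.card (Sym (Fin (n + 1)) d) := by
    have hle : s.card ≤ (Finset.univ : Finset (Sym (Fin (n + 1)) d)).card := by
      refine Finset.card_le_card_of_injOn
        (fun mm => if h : Multiset.card (φ mm) = d then (⟨φ mm, h⟩ : Sym (Fin (n + 1)) d)
          else Sym.replicate d (Fin.last n)) (fun a _ => Finset.mem_univ _) ?_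
      intro mm h1 mm' h2 heq
      simp only [Finset.mem_coe] at h1 h2
      dsimp only at heq
      have e := congrArg (fun x : Sym (Fin (n + 1)) d => (x : Multiset (Fin (n + 1)))) heq
      have hv : ∀ x ∈ s, (((if h : Multiset.card (φ x) = d then (⟨φ x, h⟩ : Sym (Fin (n + 1)) d)
          else Sym.replicate d (Fin.last n)) : Sym (Fin (n + 1)) d) : Multiset (Fin (n + 1)))
          = φ x := by
        intro x hx
        split_ifs with h
        · exact congrArg (fun y : Sym (Fin (n + 1)) d => (y : Multiset (Fin (n + 1)))) (dif_pos h)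
        · exact absurd (hcard x hx) h
      exact hinj h1 h2 ((hv mm h1).symm.trans (e.trans (hv mm' h2)))
    simpa [Finset.card_univ] using hle
  calc s.card ≤ Fintype.card (Sym (Fin (n + 1)) d) := hmain
    _ = (Fintype.card (Fin (n + 1)) + d - 1).choose d := Sym.card_sym_eq_choose d
    _ = (n + d).choose d := by rw [Fintype.card_fin]; congr 1; omega
    _ = (n + d).choose n := by
        have h := Nat.choose_symm (Nat.le_add_left d n)
        rw [Nat.add_sub_cancel] at h
        exact h.symm

theorem support_card_le_choose {n : ℕ} (F : MvPolynomial (Fin n) K) :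
    F.support.card ≤ (n + F.totalDegree).choose n :=
  card_le_choose_of_deg_le F.support fun _ hmm => MvPolynomial.le_totalDegree hmm


/-- The Riemann-Roch space `L(E)` as a `k`-submodule of `K`. -/
noncomputable def LSub (hK : IsFunctionField k v genus) (E : Point →₀ ℤ) : Submodule k K where
  carrier := {f : K | f = 0 ∨ ∀ p : Point, -(E p) ≤ v p f}
  zero_mem' := Or.inl rfl
  add_mem' := by
    intro a b ha hb
    by_cases ha0 : a = 0
    · simpa [ha0] using hb
    by_cases hb0 : b = 0
    · simpa [hb0] using ha
    by_cases hab : a + b = 0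
    · exact Or.inl hab
    refine Or.inr fun p => ?_
    rcases ha with rfl | ha
    · exact absurd rfl ha0
    rcases hb with rfl | hb
    · exact absurd rfl hb0
    exact le_trans (le_min (ha p) (hb p)) (hK.v_add p a b ha0 hb0 hab)
  smul_mem' := by
    intro c x hx
    by_cases hc : c = 0
    · left
      simp [hc]
    by_cases hx0 : x = 0
    · left
      simp [hx0]
    rcases hx with rfl | hx
    · exact absurd rfl hx0
    refine Or.inr fun p => ?_
    have halg : (algebraMap k K) c ≠ 0 := by
      simpa using hc
    rw [Algebra.smul_def, hK.v_mul p _ _ halg hx0, hK.v_algebraMap p c hc]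
    simpa using hx p

theorem mem_LSub {hK : IsFunctionField k v genus} {E : Point →₀ ℤ} {f : K} :
    f ∈ LSub hK E ↔ (f = 0 ∨ ∀ p : Point, -(E p) ≤ v p f) := Iff.rfl

theorem finrank_LSub (hK : IsFunctionField k v genus) (E : Point →₀ ℤ)
    (h : 2 * (genus : ℤ) - 2 < E.sum fun _ d => d) :
    (Module.finrank k (LSub hK E) : ℤ) = (E.sum fun _ d => d) + 1 - genus := by
  have hrr := hK.riemann_roch E h
  have hspan : Submodule.span k {f : K | f = 0 ∨ ∀ p : Point, -(E p) ≤ v p f} = LSub hK E :=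
    Submodule.span_eq (LSub hK E)
  rwa [hspan] at hrr

theorem IsFunctionField.v_neg (hK : IsFunctionField k v genus) (p : Point) {x : K}
    (hx : x ≠ 0) : v p (-x) = v p x := by
  have h1 : ((-1 : K)) ≠ 0 := by simp
  have hm := hK.v_mul p (-1 : K) (-1 : K) h1 h1
  rw [neg_mul_neg, one_mul, hK.v_one] at hm
  have hx' := hK.v_mul p (-1 : K) x h1 hx
  rw [neg_one_mul] at hx'
  omega

theorem IsFunctionField.v_sum_nonneg (hK : IsFunctionField k v genus) (p : Point)
    {ι : Type*} (s : Finset ι) (x : ι → K)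
    (hx : ∀ i ∈ s, x i = 0 ∨ 0 ≤ v p (x i)) :
    (∑ i ∈ s, x i) = 0 ∨ 0 ≤ v p (∑ i ∈ s, x i) := by
  classical
  induction s using Finset.induction with
  | empty => exact Or.inl (by simp)
  | @insert a s' haS ih =>
      rw [Finset.sum_insert haS]
      have hih := ih fun i hi => hx i (Finset.mem_insert_of_mem hi)
      have hxa := hx a (Finset.mem_insert_self a s')
      by_cases h1 : x a = 0
      · simpa [h1] using hih
      by_cases h2 : (∑ i ∈ s', x i) = 0
      · simpa [h2] using hxa
      by_cases h3 : x a + ∑ i ∈ s', x i = 0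
      · exact Or.inl h3
      refine Or.inr ?_
      have hadd := hK.v_add p _ _ h1 h2 h3
      rcases hxa with h | h
      · exact absurd h h1
      rcases hih with h' | h'
      · exact absurd h' h2
      omega

theorem residue_exists (hK : IsFunctionField k v genus) {q0 p : Point} (hpq : p ≠ q0)
    (N : ℤ) (hN : 2 * (genus : ℤ) - 2 < N - 1) {f : K}
    (hf : f ∈ LSub hK (Finsupp.single q0 N)) :
    ∃ c : k, f - algebraMap k K c = 0 ∨
      (f - algebraMap k K c ≠ 0 ∧ 1 ≤ v p (f - algebraMap k K c)) := by
  classical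
  have hdeg4 : ((Finsupp.single q0 N).sum fun _ d => d) = N := Finsupp.sum_single_index rfl
  have hdeg5 : ((Finsupp.single q0 N - Finsupp.single p 1).sum fun _ d => d) = N - 1 := by
    rw [Finsupp.sum_sub_index fun a b1 b2 => rfl, Finsupp.sum_single_index rfl,
      Finsupp.sum_single_index rfl]
  have hfr4 := finrank_LSub hK (Finsupp.single q0 N) (by rw [hdeg4]; omega)
  have hfr5 := finrank_LSub hK (Finsupp.single q0 N - Finsupp.single p 1) (by rw [hdeg5]; omega)
  rw [hdeg4] at hfr4
  rw [hdeg5] at hfr5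
  have hfd4 : FiniteDimensional k (LSub hK (Finsupp.single q0 N)) := by
    apply FiniteDimensional.of_finrank_pos
    omega
  have h1mem4 : (1 : K) ∈ LSub hK (Finsupp.single q0 N) := by
    refine Or.inr fun q => ?_
    rw [hK.v_one, Finsupp.single_apply]
    split_ifs <;> omega
  have h1not5 : (1 : K) ∉ LSub hK (Finsupp.single q0 N - Finsupp.single p 1) := by
    intro h
    rcases h with h | h
    · exact one_ne_zero h
    · have hp := h p
      rw [hK.v_one, Finsupp.sub_apply, Finsupp.single_apply, Finsupp.single_apply,
        if_neg fun hq => hpq hq.symm, if_pos rfl] at hp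
      omega
  have hle54 : LSub hK (Finsupp.single q0 N - Finsupp.single p 1) ≤
      LSub hK (Finsupp.single q0 N) := by
    intro g hg
    rcases hg with rfl | hg
    · exact Or.inl rfl
    refine Or.inr fun q => ?_
    refine le_trans ?_ (hg q)
    rw [Finsupp.sub_apply, Finsupp.single_apply (a := p)]
    split_ifs <;> omega
  have hW5le : (LSub hK (Finsupp.single q0 N - Finsupp.single p 1)
      ⊔ Submodule.span k {(1 : K)}) ≤ LSub hK (Finsupp.single q0 N) :=
    sup_le hle54 ((Submodule.span_singleton_le_iff_mem _ _).2 h1mem4)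
  haveI hfdW : FiniteDimensional k ↥(LSub hK (Finsupp.single q0 N - Finsupp.single p 1)
      ⊔ Submodule.span k {(1 : K)}) := Submodule.finiteDimensional_of_le hW5le
  have hlt : LSub hK (Finsupp.single q0 N - Finsupp.single p 1)
      < (LSub hK (Finsupp.single q0 N - Finsupp.single p 1) ⊔ Submodule.span k {(1 : K)}) := by
    refine lt_of_le_of_ne le_sup_left fun heq => h1not5 ?_
    rw [heq]
    exact Submodule.mem_sup_right (Submodule.mem_span_singleton_self (1 : K))
  have hfr_lt := Submodule.finrank_lt_finrank_of_lt hlt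
  have hfr_le : Module.finrank k ↥(LSub hK (Finsupp.single q0 N - Finsupp.single p 1)
      ⊔ Submodule.span k {(1 : K)}) ≤ Module.finrank k ↥(LSub hK (Finsupp.single q0 N)) := by
    rcases hW5le.lt_or_eq with h | h
    · exact le_of_lt (Submodule.finrank_lt_finrank_of_lt h)
    · rw [h]
  have heq45 : (LSub hK (Finsupp.single q0 N - Finsupp.single p 1)
      ⊔ Submodule.span k {(1 : K)}) = LSub hK (Finsupp.single q0 N) :=
    Submodule.eq_of_le_of_finrank_le hW5le (by omega)
  have hf4 : f ∈ (LSub hK (Finsupp.single q0 N - Finsupp.single p 1)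
      ⊔ Submodule.span k {(1 : K)}) := by
    rw [heq45]
    exact hf
  obtain ⟨g, hg, z, hz, hgz⟩ := Submodule.mem_sup.mp hf4
  obtain ⟨c, hc⟩ := Submodule.mem_span_singleton.mp hz
  refine ⟨c, ?_⟩
  have hfc : f - algebraMap k K c = g := by
    rw [← hgz, ← hc, Algebra.smul_def, mul_one]
    ring
  by_cases hg0 : g = 0
  · exact Or.inl (by rw [hfc, hg0])
  refine Or.inr ⟨by rw [hfc]; exact hg0, ?_⟩
  rw [hfc]
  rcases hg with rfl | hg
  · exact absurd rfl hg0
  have hp := hg p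
  rw [Finsupp.sub_apply, Finsupp.single_apply, Finsupp.single_apply,
    if_neg fun hq => hpq hq.symm, if_pos rfl] at hp
  omega


theorem dt_supp_finite (hK : IsFunctionField k v genus)
    {D : K → K} {dt : Point → ℤ} (hD : IsGoodDerivation k v genus D dt) :
    (Function.support fun p => max 0 (dt p)).Finite := by
  classical
  by_contra hfin
  have hinf : (Function.support fun p => max 0 (dt p)).Infinite := hfin
  obtain ⟨q0, _⟩ := hinf.nonempty
  set M : ℤ := 2 * (genus : ℤ) + 2 with hM
  have hdeg1 : ((Finsupp.single q0 M).sum fun _ d => d) = M := Finsupp.sum_single_index rfl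
  have hfr1 := finrank_LSub hK (Finsupp.single q0 M) (by rw [hdeg1]; omega)
  rw [hdeg1] at hfr1
  haveI hfd1 : FiniteDimensional k ↥(LSub hK (Finsupp.single q0 M)) :=
    FiniteDimensional.of_finrank_pos (by omega)
  set b := Module.finBasis k ↥(LSub hK (Finsupp.single q0 M)) with hb
  set P : Set Point := ⋃ i : Fin (Module.finrank k ↥(LSub hK (Finsupp.single q0 M))),
    {p : Point | D ((b i : K)) ≠ 0 ∧ v p (D ((b i : K))) ≠ 0} with hP
  have hPfin : P.Finite := by
    apply Set.finite_iUnion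
    intro i
    by_cases h : D ((b i : K)) = 0
    · have : {p : Point | D ((b i : K)) ≠ 0 ∧ v p (D ((b i : K))) ≠ 0} = ∅ := by
        ext p
        simp [h]
      rw [this]
      exact Set.finite_empty
    · exact (hK.finite_support _ h).subset fun p hp => hp.2
  obtain ⟨p, hpB, hpnot⟩ := (hinf.diff (hPfin.union (Set.finite_singleton q0))).nonempty
  have hdtp : 1 ≤ dt p := by
    have h1 : max 0 (dt p) ≠ 0 := hpB
    omega
  have hpq0 : p ≠ q0 := fun h => hpnot (Or.inr (by rw [h]; rfl))
  have hpP : p ∉ P := fun h => hpnot (Or.inl h)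
  -- every element of L(M q0) has a D-image regular at p
  have hDV : ∀ f : K, (hf : f ∈ LSub hK (Finsupp.single q0 M)) → D f = 0 ∨ 0 ≤ v p (D f) := by
    intro f hf
    have hrepr : (∑ i, ((b.repr ⟨f, hf⟩) i) • ((b i : K))) = f := by
      have h1 := Module.Basis.sum_repr b ⟨f, hf⟩
      have h2 := congrArg (Subtype.val) h1
      rw [Submodule.coe_sum] at h2
      exact h2
    have hDlin : ∀ (c : k) (x : K), D (c • x) = c • D x := by
      intro c x
      rw [Algebra.smul_def, hD.leibniz, hD.map_const, mul_zero, add_zero, Algebra.smul_def]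
    have hDsum : ∀ (s : Finset (Fin (Module.finrank k ↥(LSub hK (Finsupp.single q0 M)))))
        (x : Fin (Module.finrank k ↥(LSub hK (Finsupp.single q0 M))) → K),
        D (∑ i ∈ s, x i) = ∑ i ∈ s, D (x i) := by
      intro s x
      induction s using Finset.induction with
      | empty =>
          have h0 := hD.map_const (0 : k)
          simpa using h0
      | @insert a s' haS ih =>
          rw [Finset.sum_insert haS, Finset.sum_insert haS, hD.map_add, ih]
    have hDf : D f = ∑ i, ((b.repr ⟨f, hf⟩) i) • D ((b i : K)) := by
      conv_lhs => rw [← hrepr]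
      rw [hDsum]
      exact Finset.sum_congr rfl fun i _ => hDlin _ _
    have hterm : ∀ i ∈ Finset.univ,
        (((b.repr ⟨f, hf⟩) i) • D ((b i : K)) = 0
          ∨ 0 ≤ v p (((b.repr ⟨f, hf⟩) i) • D ((b i : K)))) := by
      intro i _
      by_cases hci : (b.repr ⟨f, hf⟩) i = 0
      · left
        rw [hci, zero_smul]
      by_cases hDbi : D ((b i : K)) = 0
      · left
        rw [hDbi, smul_zero]
      right
      have hvz : v p (D ((b i : K))) = 0 := by
        by_contra hne
        exact hpP (Set.mem_iUnion.mpr ⟨i, ⟨hDbi, hne⟩⟩)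
      rw [Algebra.smul_def, hK.v_mul p _ _ (by simpa using hci) hDbi,
        hK.v_algebraMap p _ hci, hvz]
      omega
    have hvs := hK.v_sum_nonneg p Finset.univ _ hterm
    rcases hvs with h | h
    · left
      rw [hDf]
      exact h
    · right
      rw [hDf]
      exact h
  -- L(M q0) is contained in L(M q0 - 2 p) + k·1
  have hVW : LSub hK (Finsupp.single q0 M) ≤
      (LSub hK (Finsupp.single q0 M - Finsupp.single p 2) ⊔ Submodule.span k {(1 : K)}) := by
    intro f hf
    by_cases hf0 : f = 0
    · rw [hf0]
      exact Submodule.zero_mem _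
    by_cases hDf0 : D f = 0
    · obtain ⟨c, hc⟩ := hD.ker_const f hDf0
      apply Submodule.mem_sup_right
      rw [Submodule.mem_span_singleton]
      exact ⟨c, by rw [Algebra.smul_def, mul_one, hc]⟩
    have hvDf : 0 ≤ v p (D f) := by
      rcases hDV f hf with h | h
      · exact absurd h hDf0
      · exact h
    obtain ⟨c, hc⟩ := residue_exists hK hpq0 M (by omega) hf
    rcases hc with hc0 | ⟨hcne, hcge⟩
    · apply Submodule.mem_sup_right
      rw [Submodule.mem_span_singleton]
      refine ⟨c, ?_⟩
      rw [Algebra.smul_def, mul_one]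
      exact (sub_eq_zero.mp hc0).symm
    · have hDfc : D (f - algebraMap k K c) = D f := by
        have h1 := hD.map_add (f - algebraMap k K c) (algebraMap k K c)
        rw [sub_add_cancel, hD.map_const, add_zero] at h1
        exact h1.symm
      have hvne := (hD.v_D_of_vne (f - algebraMap k K c) hcne p (by omega)).2
      rw [hDfc] at hvne
      have hge2 : 2 ≤ v p (f - algebraMap k K c) := by omega
      have hmem2 : f - algebraMap k K c
          ∈ LSub hK (Finsupp.single q0 M - Finsupp.single p 2) := by
        refine Or.inr fun q => ?_
        by_cases hqp : q = p
        · subst hqp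
          rw [Finsupp.sub_apply, Finsupp.single_apply, Finsupp.single_apply,
            if_neg fun hq => hpq0 hq.symm, if_pos rfl]
          omega
        · have hE : ((Finsupp.single q0 M - Finsupp.single p 2 : Point →₀ ℤ)) q
              = (Finsupp.single q0 M : Point →₀ ℤ) q := by
            rw [Finsupp.sub_apply, Finsupp.single_apply (a := p),
              if_neg fun h => hqp h.symm, sub_zero]
          rw [hE]
          have hfq : -(Finsupp.single q0 M q) ≤ v q f := by
            rcases hf with rfl | hf
            · exact absurd rfl hf0
            exact hf q
          by_cases hcz : c = 0
          · rw [hcz, map_zero, sub_zero]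
            exact hfq
          · have hvc : v q (algebraMap k K c) = 0 := hK.v_algebraMap q c hcz
            have halgne : algebraMap k K c ≠ 0 := by simpa using hcz
            have hvneg : v q (-(algebraMap k K c)) = 0 := by
              rw [hK.v_neg q halgne, hvc]
            have hsingle_nonneg : 0 ≤ Finsupp.single q0 M q := by
              rw [Finsupp.single_apply]
              split_ifs <;> omega
            have hsub : f - algebraMap k K c = f + -(algebraMap k K c) := by ring
            have hadd := hK.v_add q f (-(algebraMap k K c)) hf0 (by simpa using halgne)
              (by rw [← hsub]; exact hcne)
            rw [← hsub] at hadd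
            omega
      have hfinal : f = (f - algebraMap k K c) + algebraMap k K c := by ring
      rw [hfinal]
      apply Submodule.add_mem
      · exact Submodule.mem_sup_left hmem2
      · apply Submodule.mem_sup_right
        rw [Submodule.mem_span_singleton]
        exact ⟨c, by rw [Algebra.smul_def, mul_one]⟩
  -- dimension count
  have hdeg2 : ((Finsupp.single q0 M - Finsupp.single p 2).sum fun _ d => d) = M - 2 := by
    rw [Finsupp.sum_sub_index fun a b1 b2 => rfl, Finsupp.sum_single_index rfl,
      Finsupp.sum_single_index rfl]
  have hfr2 := finrank_LSub hK (Finsupp.single q0 M - Finsupp.single p 2) (by rw [hdeg2]; omega)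
  rw [hdeg2] at hfr2
  haveI hfd2 : FiniteDimensional k ↥(LSub hK (Finsupp.single q0 M - Finsupp.single p 2)) :=
    FiniteDimensional.of_finrank_pos (by omega)
  have hsup := Submodule.finrank_sup_add_finrank_inf_eq
    (LSub hK (Finsupp.single q0 M - Finsupp.single p 2)) (Submodule.span k {(1 : K)})
  have hspan1 : Module.finrank k ↥(Submodule.span k {(1 : K)}) = 1 :=
    finrank_span_singleton one_ne_zero
  have hmono : Module.finrank k ↥(LSub hK (Finsupp.single q0 M))
      ≤ Module.finrank k ↥(LSub hK (Finsupp.single q0 M - Finsupp.single p 2)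
        ⊔ Submodule.span k {(1 : K)}) := by
    rcases hVW.lt_or_eq with h | h
    · exact le_of_lt (Submodule.finrank_lt_finrank_of_lt h)
    · rw [h]
  have hinfle : 0 ≤ Module.finrank k ↥(LSub hK (Finsupp.single q0 M - Finsupp.single p 2)
      ⊓ Submodule.span k {(1 : K)}) := Nat.zero_le _
  omega

theorem keyDt {k : Type*} [Field k] [Algebra k K] {v : Point → K → ℤ} {genus : ℕ}
    (hK : IsFunctionField k v genus)
    {D : K → K} {dt : Point → ℤ} (hD : IsGoodDerivation k v genus D dt)
    (T : Finset Point) : ∑ p ∈ T, max 0 (dt p) ≤ 3 * (genus : ℤ) :=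
  le_trans (zsum_finset_le (dt_supp_finite hK hD) (fun p => le_max_left _ _) T) hD.sum_dt

theorem master {k : Type*} [Field k] [Algebra k K] {v : Point → K → ℤ} {genus : ℕ}
    (hK : IsFunctionField k v genus)
    {D : K → K} {dt : Point → ℤ} (hD : IsGoodDerivation k v genus D dt)
    {S : Set Point} (hS : S.Finite)
    {n : ℕ} (F : MvPolynomial (Fin n) K)
    {u : Fin n → K} (hu : ∀ i, IsSUnit v S (u i)) :
    htilde v (Du D u F) ≤ (2 * (F.support.card : ℤ) + 1) * htilde v F
      + ((hS.toFinset.filter (fun p => ∃ j, v p (u j) ≠ 0)).card : ℤ) + 3 * genus := by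
  classical
  have hune : ∀ j, u j ≠ 0 := fun j => (hu j).1
  have hUne : ∀ mm : Fin n →₀ ℕ, (∏ j, u j ^ mm j) ≠ 0 :=
    fun mm => Finset.prod_ne_zero_iff.2 fun j _ => pow_ne_zero _ (hune j)
  set G := Du D u F with hGdef
  set S' : Finset Point := hS.toFinset.filter (fun p => ∃ j, v p (u j) ≠ 0) with hS'def
  -- pointwise estimate
  have key : ∀ p : Point,
      max 0 (-(vPoly v p G)) ≤ max 0 (-(vPoly v p F)) + max 0 (dt p)
        + ((if ∃ mm ∈ F.support, v p (F.coeff mm) ≠ 0 then (1:ℤ) else 0)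
          + (if ∃ j, v p (u j) ≠ 0 then (1:ℤ) else 0)) := by
    intro p
    have hE1 : (0:ℤ) ≤ (if ∃ mm ∈ F.support, v p (F.coeff mm) ≠ 0 then (1:ℤ) else 0) := by
      split_ifs <;> norm_num
    have hE2 : (0:ℤ) ≤ (if ∃ j, v p (u j) ≠ 0 then (1:ℤ) else 0) := by
      split_ifs <;> norm_num
    have hRHS0 : (0:ℤ) ≤ max 0 (-(vPoly v p F)) + max 0 (dt p)
        + ((if ∃ mm ∈ F.support, v p (F.coeff mm) ≠ 0 then (1:ℤ) else 0)
          + (if ∃ j, v p (u j) ≠ 0 then (1:ℤ) else 0)) := by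
      have := le_max_left (0:ℤ) (-(vPoly v p F))
      have := le_max_left (0:ℤ) (dt p)
      linarith
    by_cases hne : G.support.Nonempty
    · obtain ⟨mm, hmmG, hval⟩ := vPoly_exists p hne
      have hmmF : mm ∈ F.support := support_Du_subset D u F hmmG
      have ha : F.coeff mm ≠ 0 := MvPolynomial.mem_support_iff.mp hmmF
      have hb : G.coeff mm ≠ 0 := MvPolynomial.mem_support_iff.mp hmmG
      have hc : F.coeff mm * ∏ j, u j ^ mm j ≠ 0 := mul_ne_zero ha (hUne mm)
      have hbcoeff : G.coeff mm = D (F.coeff mm * ∏ j, u j ^ mm j) / ∏ j, u j ^ mm j := by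
        rw [hGdef, coeff_Du, if_pos hmmF]
      have hDc : D (F.coeff mm * ∏ j, u j ^ mm j) ≠ 0 := by
        intro h
        apply hb
        rw [hbcoeff, h, zero_div]
      have hvb : v p (G.coeff mm) = v p (D (F.coeff mm * ∏ j, u j ^ mm j)) - v p (∏ j, u j ^ mm j) := by
        rw [hbcoeff]
        exact hK.v_div p hDc (hUne mm)
      have hvc : v p (F.coeff mm * ∏ j, u j ^ mm j) = v p (F.coeff mm) + v p (∏ j, u j ^ mm j) :=
        hK.v_mul p _ _ ha (hUne mm)
      have hvFle : -(v p (F.coeff mm)) ≤ max 0 (-(vPoly v p F)) :=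
        le_trans (neg_le_neg (vPoly_le p hmmF)) (le_max_right _ _)
      have hdtle : dt p ≤ max 0 (dt p) := le_max_right _ _
      have main : -(v p (G.coeff mm)) ≤ max 0 (-(vPoly v p F)) + max 0 (dt p)
          + ((if ∃ mm ∈ F.support, v p (F.coeff mm) ≠ 0 then (1:ℤ) else 0)
            + (if ∃ j, v p (u j) ≠ 0 then (1:ℤ) else 0)) := by
        by_cases hvc0 : v p (F.coeff mm * ∏ j, u j ^ mm j) = 0
        · have hge := hD.v_D_of_veq _ hc p hvc0 hDc
          have hU : v p (∏ j, u j ^ mm j) = -(v p (F.coeff mm)) := by omega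
          rw [hvb, hU]
          linarith
        · obtain ⟨_, heq⟩ := hD.v_D_of_vne _ hc p hvc0
          have h1 : (1:ℤ) ≤ (if ∃ mm ∈ F.support, v p (F.coeff mm) ≠ 0 then (1:ℤ) else 0)
              + (if ∃ j, v p (u j) ≠ 0 then (1:ℤ) else 0) := by
            rcases (by omega : v p (F.coeff mm) ≠ 0 ∨ v p (∏ j, u j ^ mm j) ≠ 0) with h | h
            · rw [if_pos ⟨mm, hmmF, h⟩]
              linarith
            · have hj : ∃ j, v p (u j) ≠ 0 := by
                by_contra hall
                push_neg at hall
                exact h (hK.v_prodpow_zero p hune mm hall)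
              rw [if_pos hj]
              linarith
          rw [hvb, heq]
          have : -(v p (F.coeff mm * ∏ j, u j ^ mm j) - 1 - dt p)
              + v p (∏ j, u j ^ mm j) = -(v p (F.coeff mm)) + 1 + dt p := by omega
          linarith [this, hvFle, hdtle, h1]
      rw [hval]
      exact max_le hRHS0 main
    · rw [vPoly, dif_neg hne]
      simpa using hRHS0
  -- the finite set of relevant points
  have hA1 : {p : Point | vPoly v p G ≠ 0}.Finite := vPoly_support_finite hK G
  have hA2 : {p : Point | vPoly v p F ≠ 0}.Finite := vPoly_support_finite hK F
  have hA3 : (⋃ mm ∈ (F.support : Set (Fin n →₀ ℕ)), {p : Point | v p (F.coeff mm) ≠ 0}).Finite :=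
    Set.Finite.biUnion (F.support.finite_toSet) fun mm hmm =>
      hK.finite_support _ (MvPolynomial.mem_support_iff.mp hmm)
  have hbig : ({p : Point | vPoly v p G ≠ 0} ∪ ({p : Point | vPoly v p F ≠ 0}
      ∪ ((⋃ mm ∈ (F.support : Set (Fin n →₀ ℕ)), {p : Point | v p (F.coeff mm) ≠ 0})
        ∪ ↑S'))).Finite :=
    hA1.union (hA2.union (hA3.union (S'.finite_toSet)))
  set T : Finset Point := hbig.toFinset with hTdef
  have hsub_tD : (Function.support fun p => max 0 (-(vPoly v p G))) ⊆ ↑T := by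
    intro p hp
    rw [hTdef, Set.Finite.coe_toFinset]
    left
    intro h0
    apply hp
    simp [Function.mem_support, h0]
  have hsub_tF : (Function.support fun p => max 0 (-(vPoly v p F))) ⊆ ↑T := by
    intro p hp
    rw [hTdef, Set.Finite.coe_toFinset]
    right; left
    intro h0
    apply hp
    simp [Function.mem_support, h0]
  have hhG : htilde v G = ∑ p ∈ T, max 0 (-(vPoly v p G)) :=
    finsum_eq_sum_of_support_subset _ hsub_tD
  have hhF : htilde v F = ∑ p ∈ T, max 0 (-(vPoly v p F)) :=
    finsum_eq_sum_of_support_subset _ hsub_tF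
  -- sum the pointwise bound over T
  have step1 : ∑ p ∈ T, max 0 (-(vPoly v p G)) ≤
      (∑ p ∈ T, max 0 (-(vPoly v p F))) + (∑ p ∈ T, max 0 (dt p))
        + ((∑ p ∈ T, (if ∃ mm ∈ F.support, v p (F.coeff mm) ≠ 0 then (1:ℤ) else 0))
          + (∑ p ∈ T, (if ∃ j, v p (u j) ≠ 0 then (1:ℤ) else 0))) := by
    calc ∑ p ∈ T, max 0 (-(vPoly v p G))
        ≤ ∑ p ∈ T, (max 0 (-(vPoly v p F)) + max 0 (dt p)
          + ((if ∃ mm ∈ F.support, v p (F.coeff mm) ≠ 0 then (1:ℤ) else 0)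
            + (if ∃ j, v p (u j) ≠ 0 then (1:ℤ) else 0))) :=
          Finset.sum_le_sum fun p _ => key p
      _ = _ := by rw [Finset.sum_add_distrib, Finset.sum_add_distrib, Finset.sum_add_distrib]
  -- bound the e2 sum
  have he2sum : (∑ p ∈ T, (if ∃ j, v p (u j) ≠ 0 then (1:ℤ) else 0)) ≤ (S'.card : ℤ) := by
    have hpt : ∀ p ∈ T, (if ∃ j, v p (u j) ≠ 0 then (1:ℤ) else 0)
        ≤ (if p ∈ S' then (1:ℤ) else 0) := by
      intro p _
      split_ifs with h1 h2
      · exact le_refl _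
      · exfalso
        apply h2
        rw [hS'def, Finset.mem_filter]
        refine ⟨?_, h1⟩
        rw [Set.Finite.mem_toFinset]
        obtain ⟨j, hj⟩ := h1
        by_contra hpS
        exact hj ((hu j).2 p hpS)
      · norm_num
      · exact le_refl _
    calc (∑ p ∈ T, (if ∃ j, v p (u j) ≠ 0 then (1:ℤ) else 0))
        ≤ ∑ p ∈ T, (if p ∈ S' then (1:ℤ) else 0) := Finset.sum_le_sum hpt
      _ = ∑ p ∈ T ∩ S', (1:ℤ) := Finset.sum_ite_mem T S' _
      _ = ((T ∩ S').card : ℤ) := by simp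
      _ ≤ (S'.card : ℤ) := by
          exact_mod_cast Finset.card_le_card (Finset.inter_subset_right)
  -- bound the e1 sum
  have he1sum : (∑ p ∈ T, (if ∃ mm ∈ F.support, v p (F.coeff mm) ≠ 0 then (1:ℤ) else 0))
      ≤ 2 * (F.support.card : ℤ) * htilde v F := by
    have hpt : ∀ p ∈ T, (if ∃ mm ∈ F.support, v p (F.coeff mm) ≠ 0 then (1:ℤ) else 0)
        ≤ ∑ mm ∈ F.support, (if v p (F.coeff mm) ≠ 0 then (1:ℤ) else 0) := by
      intro p _
      split_ifs with h
      · obtain ⟨mm, hmm, hne⟩ := h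
        have hs := Finset.single_le_sum
          (f := fun mm => if v p (F.coeff mm) ≠ 0 then (1:ℤ) else 0)
          (fun i _ => by split_ifs <;> norm_num) hmm
        rw [if_pos hne] at hs
        exact hs
      · exact Finset.sum_nonneg fun i _ => by split_ifs <;> norm_num
    have hper : ∀ mm ∈ F.support,
        (∑ p ∈ T, (if v p (F.coeff mm) ≠ 0 then (1:ℤ) else 0)) ≤ 2 * htilde v F := by
      intro mm hmm
      have ha : F.coeff mm ≠ 0 := MvPolynomial.mem_support_iff.mp hmm
      have hfs := hK.finite_support _ ha
      have hsupp1 : (Function.support fun p => max 0 (v p (F.coeff mm))) ⊆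
          {p : Point | v p (F.coeff mm) ≠ 0} := by
        intro p hp
        intro h0
        apply hp
        simp [Function.mem_support, h0]
      have hsupp2 : (Function.support fun p => max 0 (-(v p (F.coeff mm)))) ⊆
          {p : Point | v p (F.coeff mm) ≠ 0} := by
        intro p hp
        intro h0
        apply hp
        simp [Function.mem_support, h0]
      have hsupp3 : (Function.support fun p =>
          max 0 (v p (F.coeff mm)) + max 0 (-(v p (F.coeff mm)))) ⊆
          {p : Point | v p (F.coeff mm) ≠ 0} := by
        intro p hp
        intro h0
        apply hp
        simp [Function.mem_support, h0]
      calc (∑ p ∈ T, (if v p (F.coeff mm) ≠ 0 then (1:ℤ) else 0))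
          ≤ ∑ p ∈ T, (max 0 (v p (F.coeff mm)) + max 0 (-(v p (F.coeff mm)))) := by
            apply Finset.sum_le_sum
            intro p _
            split_ifs with h
            · omega
            · omega
        _ ≤ ∑ᶠ p : Point, (max 0 (v p (F.coeff mm)) + max 0 (-(v p (F.coeff mm)))) :=
            zsum_finset_le (hfs.subset hsupp3)
              (fun p => add_nonneg (le_max_left _ _) (le_max_left _ _)) T
        _ = (∑ᶠ p : Point, max 0 (v p (F.coeff mm)))
            + ∑ᶠ p : Point, max 0 (-(v p (F.coeff mm))) :=
            finsum_add_distrib (hfs.subset hsupp1) (hfs.subset hsupp2)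
        _ = (∑ᶠ p : Point, max 0 (-(v p (F.coeff mm))))
            + ∑ᶠ p : Point, max 0 (-(v p (F.coeff mm))) := by rw [sum_v0_eq hK ha]
        _ ≤ htilde v F + htilde v F := by
            have hmono : ∑ᶠ p : Point, max 0 (-(v p (F.coeff mm))) ≤ htilde v F := by
              apply zsum_le (hfs.subset hsupp2)
                ((vPoly_support_finite hK F).subset (by
                  intro p hp
                  intro h0
                  apply hp
                  simp [Function.mem_support, h0]))
              intro p
              exact max_le (le_max_left _ _)
                (le_trans (neg_le_neg (vPoly_le p hmm)) (le_max_right _ _))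
            linarith
        _ = 2 * htilde v F := by ring
    calc (∑ p ∈ T, (if ∃ mm ∈ F.support, v p (F.coeff mm) ≠ 0 then (1:ℤ) else 0))
        ≤ ∑ p ∈ T, ∑ mm ∈ F.support, (if v p (F.coeff mm) ≠ 0 then (1:ℤ) else 0) :=
          Finset.sum_le_sum hpt
      _ = ∑ mm ∈ F.support, ∑ p ∈ T, (if v p (F.coeff mm) ≠ 0 then (1:ℤ) else 0) :=
          Finset.sum_comm
      _ ≤ ∑ _mm ∈ F.support, 2 * htilde v F := Finset.sum_le_sum hper
      _ = (F.support.card : ℤ) * (2 * htilde v F) := by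
          rw [Finset.sum_const, nsmul_eq_mul]
      _ = 2 * (F.support.card : ℤ) * htilde v F := by ring
  have hdtsum : (∑ p ∈ T, max 0 (dt p)) ≤ 3 * (genus : ℤ) := keyDt hK hD T
  have hexpand : (2 * (F.support.card : ℤ) + 1) * htilde v F
      = 2 * (F.support.card : ℤ) * htilde v F + htilde v F := by ring
  rw [hhG, hexpand]
  rw [hhF] at he1sum ⊢
  linarith [step1, he2sum, he1sum, hdtsum]

end AuxLemmas

/-- **Proposition 3.2.** For a nonconstant `F ∈ K[x_1,…,x_n]` and `S`-units `u_1,…,u_n`,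
`h̃(D_u(F)) ≤ (2|I_F|+1)·h̃(F) + |S| + 3𝔤`; in particular, with
`c₁ = 2·C(n+deg F, n)+1` and `c₂ = 3`,
`h̃(D_u(F)) ≤ c₁·h̃(F) + c₂·max{1, 2𝔤−2+|S|}`. -/
theorem htilde_Du_le
    (k K Point : Type*) [Field k] [Field K] [Algebra k K] [IsAlgClosed k] [CharZero k]
    (v : Point → K → ℤ) (genus : ℕ) (hK : IsFunctionField k v genus)
    (D : K → K) (dt : Point → ℤ) (hD : IsGoodDerivation k v genus D dt)
    (S : Set Point) (hS : S.Finite)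
    (n : ℕ) (F : MvPolynomial (Fin n) K) (hF : 0 < F.totalDegree)
    (u : Fin n → K) (hu : ∀ i, IsSUnit v S (u i)) :
    htilde v (Du D u F) ≤ (2 * (F.support.card : ℤ) + 1) * htilde v F
        + (S.ncard : ℤ) + 3 * genus
    ∧ htilde v (Du D u F)
        ≤ (2 * (Nat.choose (n + F.totalDegree) n : ℤ) + 1) * htilde v F
          + 3 * max 1 (2 * (genus : ℤ) - 2 + (S.ncard : ℤ)) := by
  classical
  have hmaster := master hK hD hS F hu
  have hS'le : ((hS.toFinset.filter (fun p => ∃ j, v p (u j) ≠ 0)).card : ℤ)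
      ≤ (S.ncard : ℤ) := by
    have h1 : (hS.toFinset.filter (fun p => ∃ j, v p (u j) ≠ 0)).card ≤ hS.toFinset.card :=
      Finset.card_le_card (Finset.filter_subset _ _)
    have h2 : S.ncard = hS.toFinset.card := Set.ncard_eq_toFinset_card S hS
    rw [h2]
    exact_mod_cast h1
  constructor
  · linarith [hmaster, hS'le]
  · have hIle : (F.support.card : ℤ) ≤ ((n + F.totalDegree).choose n : ℤ) := by
      exact_mod_cast support_card_le_choose F
    have hhF0 : (0:ℤ) ≤ htilde v F := finsum_nonneg fun p => le_max_left _ _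
    have hcoef : (2 * (F.support.card : ℤ) + 1) * htilde v F
        ≤ (2 * ((n + F.totalDegree).choose n : ℤ) + 1) * htilde v F := by
      apply mul_le_mul_of_nonneg_right _ hhF0
      linarith
    have hS'0 : (S.ncard : ℤ) ≤ 1
        → ((hS.toFinset.filter (fun p => ∃ j, v p (u j) ≠ 0)).card : ℤ) = 0 := by
      intro h1
      have hemp : hS.toFinset.filter (fun p => ∃ j, v p (u j) ≠ 0) = ∅ := by
        rw [Finset.eq_empty_iff_forall_notMem]
        intro p hp
        rw [Finset.mem_filter] at hp
        obtain ⟨hpT, j, hj⟩ := hp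
        have hpS : p ∈ S := (Set.Finite.mem_toFinset hS).mp hpT
        apply hj
        have hsingle : ∀ x : Point, x ≠ p → v x (u j) = 0 := by
          intro x hx
          by_cases hxS : x ∈ S
          · exact absurd ((Set.ncard_le_one hS).mp (by exact_mod_cast h1) x hxS p hpS) hx
          · exact (hu j).2 x hxS
        have hfs := finsum_eq_single (fun x => v x (u j)) p hsingle
        rw [hK.sum_v (u j) (hu j).1] at hfs
        omega
      rw [hemp]
      simp
    have harith : ((hS.toFinset.filter (fun p => ∃ j, v p (u j) ≠ 0)).card : ℤ)
        + 3 * (genus : ℤ) ≤ 3 * max 1 (2 * (genus : ℤ) - 2 + (S.ncard : ℤ)) := by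
      by_cases hc : (S.ncard : ℤ) ≤ 1
      · have h0 := hS'0 hc
        omega
      · omega
    linarith [hmaster, hcoef, harith]

end FunctionFieldGCD
end
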